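/- Let K be a field and f ∈ K[x]. Then every prime ideal 𝔭 of the polynomial ring K[x,y] containing y² − f(x) is of the form 𝔭 = (y − h(x), g(x)) or of the form 𝔭 = (y² − f(x), g(x)) for some polynomials h(x), g(x) ∈ K[x], where g generates the ideal 𝔭 ∩ K[x] of K[x]. -/

import Mathlib

open Polynomial

/-- every prime ideal `𝔭` of `K[x][y]` containing `y² − f(x)` is of the form
`𝔭 = (y − h(x), g(x))` or `𝔭 = (y² − f(x), g(x))` for some `h, g ∈ K[x]`, where `g`
generates the ideal `𝔭 ∩ K[x]`. -/
theorem prime_over_hyperelliptic {K : Type*} [Field K] (f : K[X])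
    (𝔭 : Ideal (Polynomial K[X])) (h𝔭 : 𝔭.IsPrime)
    (hmem : (X : Polynomial K[X]) ^ 2 - C f ∈ 𝔭) :
    ∃ g : K[X],
      𝔭.comap (C : K[X] →+* Polynomial K[X]) = Ideal.span {g} ∧
      ((∃ h : K[X], 𝔭 = Ideal.span {(X : Polynomial K[X]) - C h, C g}) ∨
        𝔭 = Ideal.span {(X : Polynomial K[X]) ^ 2 - C f, C g}) := by
  classical
  set 𝔮 := 𝔭.comap (C : K[X] →+* Polynomial K[X]) with h𝔮
  obtain ⟨g, hg⟩ : ∃ g, 𝔮 = Ideal.span {g} :=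
    ⟨Submodule.IsPrincipal.generator 𝔮, (Ideal.span_singleton_generator 𝔮).symm⟩
  refine ⟨g, hg, ?_⟩
  have hCg : C g ∈ 𝔭 := by
    have : g ∈ 𝔮 := hg ▸ Ideal.subset_span rfl
    exact this
  have hcomap : ∀ a : K[X], C a ∈ 𝔭 → g ∣ a := by
    intro a ha
    have h1 : a ∈ 𝔮 := ha
    rw [hg, Ideal.mem_span_singleton] at h1
    exact h1
  by_cases hyes : ∃ h : K[X], (X : Polynomial K[X]) - C h ∈ 𝔭
  · obtain ⟨h, hh⟩ := hyes
    left
    refine ⟨h, le_antisymm ?_ ?_⟩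
    · intro p hp
      obtain ⟨q, hq⟩ : (X : Polynomial K[X]) - C h ∣ p - C (p.eval h) :=
        X_sub_C_dvd_sub_C_eval
      have h1 : p - C (p.eval h) ∈ 𝔭 := by rw [hq]; exact Ideal.mul_mem_right _ _ hh
      have h2 : C (p.eval h) ∈ 𝔭 := by
        have := Ideal.sub_mem _ hp h1
        simpa using this
      obtain ⟨t, ht⟩ := hcomap _ h2
      rw [Ideal.mem_span_pair]
      refine ⟨q, C t, ?_⟩
      have : p = ((X : Polynomial K[X]) - C h) * q + C (p.eval h) := by
        rw [← hq]; ring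
      rw [this, ht]
      simp only [map_mul]
      ring
    · rw [Ideal.span_le]
      rintro x (rfl | rfl) <;> simp_all
  · right
    refine le_antisymm ?_ ?_
    · intro p hp
      have hm : ((X : Polynomial K[X]) ^ 2 - C f).Monic := monic_X_pow_sub_C f two_ne_zero
      set r := p %ₘ ((X : Polynomial K[X]) ^ 2 - C f) with hrdef
      have hrmem : r ∈ 𝔭 := by
        have heq := p.modByMonic_add_div ((X : Polynomial K[X]) ^ 2 - C f)
        rw [hrdef, eq_sub_of_add_eq heq]
        exact Ideal.sub_mem _ hp (Ideal.mul_mem_right _ _ hmem)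
      have hdeg : r.degree ≤ 1 := by
        have h2 : ((X : Polynomial K[X]) ^ 2 - C f).degree = 2 := degree_X_pow_sub_C (by norm_num) f
        have hlt := degree_modByMonic_lt p hm
        rw [h2] at hlt
        exact Order.le_of_lt_succ (by exact_mod_cast hlt)
      set a := r.coeff 1 with hadef
      set b := r.coeff 0 with hbdef
      have hre : r = C a * X + C b := eq_X_add_C_of_degree_le_one hdeg
      have key : C (a ^ 2 * f - b ^ 2) ∈ 𝔭 := by
        have heq : C (a ^ 2 * f - b ^ 2) =
            r * (C a * X - C b) - C a ^ 2 * ((X : Polynomial K[X]) ^ 2 - C f) := by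
          rw [hre]; simp only [map_sub, map_mul, map_pow]; ring
        rw [heq]
        exact Ideal.sub_mem _ (Ideal.mul_mem_right _ _ hrmem) (Ideal.mul_mem_left _ _ hmem)
      have hgd : g ∣ a ^ 2 * f - b ^ 2 := hcomap _ key
      have hga : g ∣ a := by
        by_cases hg0 : g = 0
        · subst hg0
          rw [zero_dvd_iff, sub_eq_zero] at hgd
          rw [zero_dvd_iff]
          by_contra ha0
          have hab : a ∣ b := by
            have : a ^ 2 ∣ b ^ 2 := ⟨f, hgd.symm⟩
            exact (IsIntegrallyClosed.pow_dvd_pow_iff two_ne_zero).mp this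
          obtain ⟨c, hc⟩ := hab
          have hr2 : r = C a * ((X : Polynomial K[X]) + C c) := by
            rw [hre, hc]; simp only [map_mul]; ring
          rcases h𝔭.mem_or_mem (hr2 ▸ hrmem) with hca | hxc
          · exact ha0 (by simpa [zero_dvd_iff] using hcomap a hca)
          · exact hyes ⟨-c, by simpa [sub_neg_eq_add] using hxc⟩
        · by_contra hna
          haveI hQp : (Ideal.span {g} : Ideal K[X]).IsPrime := hg ▸ Ideal.IsPrime.comap C
          have hmax : (Ideal.span {g} : Ideal K[X]).IsMaximal :=
            IsPrime.to_maximal_ideal (by simpa [Ideal.span_singleton_eq_bot] using hg0)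
          have hanot : a ∉ Ideal.span {g} := by
            rw [Ideal.mem_span_singleton]; exact hna
          obtain ⟨v, i, hi, hvi⟩ := hmax.exists_inv hanot
          rw [Ideal.mem_span_singleton] at hi
          obtain ⟨u, hu⟩ := hi
          have hva : v * a + g * u = 1 := by rw [hu] at hvi; exact hvi
          have hX : (X : Polynomial K[X]) + C (v * b) ∈ 𝔭 := by
            have heq : (X : Polynomial K[X]) + C (v * b) = C v * r + C g * C u * X := by
              rw [hre,
                show (X : Polynomial K[X]) + C (v * b) = C (v * a + g * u) * X + C (v * b) by
                  rw [hva, map_one, one_mul]]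
              simp only [map_add, map_mul]
              ring
            rw [heq]
            exact Ideal.add_mem _ (Ideal.mul_mem_left _ _ hrmem)
              (Ideal.mul_mem_right _ _ (Ideal.mul_mem_right _ _ hCg))
          exact hyes ⟨-(v * b), by simpa [sub_neg_eq_add] using hX⟩
      obtain ⟨a₁, ha₁⟩ := hga
      have hCb : C b ∈ 𝔭 := by
        have heq : C b = r - C g * C a₁ * X := by
          rw [hre, ha₁]; simp only [map_mul]; ring
        rw [heq]
        exact Ideal.sub_mem _ hrmem (Ideal.mul_mem_right _ _ (Ideal.mul_mem_right _ _ hCg))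
      obtain ⟨b₁, hb₁⟩ := hcomap b hCb
      rw [Ideal.mem_span_pair]
      refine ⟨p /ₘ ((X : Polynomial K[X]) ^ 2 - C f), C a₁ * X + C b₁, ?_⟩
      have heq := p.modByMonic_add_div ((X : Polynomial K[X]) ^ 2 - C f)
      rw [← hrdef] at heq
      have hr2 : r = C g * (C a₁ * X + C b₁) := by
        rw [hre, ha₁, hb₁]; simp only [map_mul]; ring
      calc p /ₘ ((X : Polynomial K[X]) ^ 2 - C f) * ((X : Polynomial K[X]) ^ 2 - C f) +
            (C a₁ * X + C b₁) * C g
          = r + ((X : Polynomial K[X]) ^ 2 - C f) * (p /ₘ ((X : Polynomial K[X]) ^ 2 - C f)) := by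
            rw [hr2]; ring
        _ = p := heq
    · rw [Ideal.span_le]
      rintro x (rfl | rfl) <;> simp_all
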